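/- arXiv:1301.4583 — 2 statements merged into one kernel-verified Lean document; each statement's English description precedes it below -/
import Mathlib

section
/- Suppose k_{n_1,m_2} = 0 and write j = j_{n_1,m_2}. Let P be a regular partition of K_{m_1(n_1),m_2(n_2)} such that τ(P) is asymmetric, and let G be a connected component of τ'(P) that is a tree with at least 2 edges, having l leaves and d = d(G) defects. Then v(G) ≤ m_2 - 2j - l - j·μ(G) - d. -/
/-- Vertex type of the complete multipartite graph with `m1` parts of size `n1`
and `m2` parts of size `n2`.  The parts of size `n2` are indexed by `Fin m2`
(these play the role of `X_1, …, X_{m2}` in the paper). -/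
abbrev MPV (m1 n1 m2 n2 : ℕ) : Type :=
  (Fin m1 × Fin n1) ⊕ (Fin m2 × Fin n2)

/-- The part (maximal independent set) containing a vertex. -/
def partOf {m1 n1 m2 n2 : ℕ} (v : MPV m1 n1 m2 n2) : Fin m1 ⊕ Fin m2 :=
  Sum.map Prod.fst Prod.fst v

/-- The complete multipartite graph `K_{m1(n1), m2(n2)}`. -/
def KMP (m1 n1 m2 n2 : ℕ) : SimpleGraph (MPV m1 n1 m2 n2) :=
  SimpleGraph.comap partOf ⊤

/-- `P` is a regular partition: a partition of the vertex set each of whose parts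
meets each maximal independent set in at most one vertex. -/
def IsRegularPartition {m1 n1 m2 n2 : ℕ} (P : Set (Set (MPV m1 n1 m2 n2))) : Prop :=
  Setoid.IsPartition P ∧
    ∀ p ∈ P, ∀ i : Fin m1 ⊕ Fin m2, {v | v ∈ p ∧ partOf v = i}.Subsingleton

/-- The incidence relation of the hypergraph `τ(P)`: its vertices are the parts of `P`,
its edges are the maximal independent sets, and a part is incident to a maximal
independent set iff they intersect (for a regular partition, iff they intersect in
exactly one vertex). -/
def tauInc {m1 n1 m2 n2 : ℕ} (P : Set (Set (MPV m1 n1 m2 n2))) :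
    ↥P → (Fin m1 ⊕ Fin m2) → Prop :=
  fun p i => ∃ v ∈ p.1, partOf v = i

/-- A hypergraph, given by its incidence relation, is asymmetric: its only
automorphism (pair of permutations of vertices and edges preserving incidence)
is the identity. -/
def HypAsymmetric {Vh Eh : Type*} (I : Vh → Eh → Prop) : Prop :=
  ∀ (σ : Equiv.Perm Vh) (τ : Equiv.Perm Eh),
    (∀ v e, I v e ↔ I (σ v) (τ e)) → σ = 1 ∧ τ = 1

variable {m1 n1 m2 n2 : ℕ}

/-- Incidence of the hypergraph `τ'(P)`: only the `m1` edges of size `n1` are kept. -/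
def tauInc' (P : Set (Set (MPV m1 n1 m2 n2))) (p : ↥P) (j : Fin m1) : Prop :=
  tauInc P p (Sum.inl j)

/-- The label of a vertex of `τ'(P)`: the set of indices `i ≤ m2` with the vertex
incident to the `n2`-edge `X_i`. -/
def labelOf (P : Set (Set (MPV m1 n1 m2 n2))) (p : ↥P) : Set (Fin m2) :=
  {i | tauInc P p (Sum.inr i)}

/-- The weight of a vertex of `τ'(P)`: the cardinality of its label. -/
noncomputable def wtv (P : Set (Set (MPV m1 n1 m2 n2))) (p : ↥P) : ℕ :=
  (labelOf P p).ncard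

/-- The degree of a vertex in `τ'(P)`. -/
noncomputable def degE (P : Set (Set (MPV m1 n1 m2 n2))) (p : ↥P) : ℕ :=
  {j : Fin m1 | tauInc' P p j}.ncard

/-- The incidence (bipartite) graph of `τ'(P)`, used to speak about its connected
components. -/
def incTG (P : Set (Set (MPV m1 n1 m2 n2))) : SimpleGraph (↥P ⊕ Fin m1) :=
  SimpleGraph.fromRel (fun a b => ∃ p j, a = Sum.inl p ∧ b = Sum.inr j ∧ tauInc' P p j)

/-- The vertex set of a connected component of `τ'(P)`. -/
def compV (P : Set (Set (MPV m1 n1 m2 n2))) (c : (incTG P).ConnectedComponent) :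
    Set ↥P :=
  {p | (incTG P).connectedComponentMk (Sum.inl p) = c}

/-- The edge set of a connected component of `τ'(P)`. -/
def compE (P : Set (Set (MPV m1 n1 m2 n2))) (c : (incTG P).ConnectedComponent) :
    Set (Fin m1) :=
  {j | (incTG P).connectedComponentMk (Sum.inr j) = c}

/-- The weight `w(G)` of a connected component `G` of `τ'(P)`. -/
noncomputable def wComp (P : Set (Set (MPV m1 n1 m2 n2)))
    (c : (incTG P).ConnectedComponent) : ℕ :=
  ∑ᶠ p ∈ compV P c, wtv P p

/-- `μ(G) = Σ_{v : deg v > 2} (deg v - 2)` for a component `G` of `τ'(P)`. -/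
noncomputable def muComp (P : Set (Set (MPV m1 n1 m2 n2)))
    (c : (incTG P).ConnectedComponent) : ℕ :=
  ∑ᶠ p ∈ compV P c, (degE P p - 2)

/-- `deg_1(e)`: the number of degree-1 vertices of the edge `e` of `τ'(P)`. -/
noncomputable def deg1E (P : Set (Set (MPV m1 n1 m2 n2))) (e : Fin m1) : ℕ :=
  {p | tauInc' P p e ∧ degE P p = 1}.ncard

/-- The total weight of the degree-1 vertices of the edge `e` of `τ'(P)`. -/
noncomputable def wSE (P : Set (Set (MPV m1 n1 m2 n2))) (e : Fin m1) : ℕ :=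
  ∑ᶠ p ∈ {p | tauInc' P p e ∧ degE P p = 1}, wtv P p

/-- `Σ_{i=0}^{t-1} C(m,i)`. -/
def binPartial (m t : ℕ) : ℕ :=
  ∑ i ∈ Finset.range t, Nat.choose m i

/-- The largest `t` (with `t = j' + 1` in the notation of the paper) such that
`Σ_{i=0}^{t-1} C(m,i) ≤ y`. -/
def wBt (m y : ℕ) : ℕ :=
  Nat.findGreatest (fun t => binPartial m t ≤ y) (m + 1)

/-- The quantity `w_y`: writing `y = Σ_{i=0}^{j'} C(m,i) + k'` with `j' ≥ -1` and either
`0 ≤ k' < C(m,j'+1)`, or `k' = 0` and `j' = m`, define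
`w_y = Σ_{i=0}^{j'} (m-i)·C(m,i) + k'(m-j'-1)`. -/
def wB (m y : ℕ) : ℕ :=
  (∑ i ∈ Finset.range (wBt m y), (m - i) * Nat.choose m i)
    + (y - binPartial m (wBt m y)) * (m - wBt m y)

/-- The number of defects `d(G)` of a component `G` of `τ'(P)`, counted with
multiplicity: each vertex `v` of degree at least `2` contributes `m2 - w(v)`, and
each edge `e` contributes `w_{deg_1 e}` minus the weight of its degree-1 vertices. -/
noncomputable def dComp (P : Set (Set (MPV m1 n1 m2 n2)))
    (c : (incTG P).ConnectedComponent) : ℕ :=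
  (∑ᶠ p ∈ {p ∈ compV P c | 2 ≤ degE P p}, (m2 - wtv P p))
    + ∑ᶠ e ∈ compE P c, (wB m2 (deg1E P e) - wSE P e)


lemma bp_succ (m t : ℕ) : binPartial m (t+1) = binPartial m t + Nat.choose m t :=
  Finset.sum_range_succ _ _

lemma bp_mono (m : ℕ) : Monotone (binPartial m) := fun _ _ h =>
  Finset.sum_le_sum_of_subset (Finset.range_subset_range.2 h)

lemma bp_lt (m : ℕ) {t t' : ℕ} (h : t < t') (ht : t ≤ m) :
    binPartial m t < binPartial m t' :=
  lt_of_lt_of_le (by rw [bp_succ]; exact Nat.lt_add_of_pos_right (Nat.choose_pos ht))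
    (bp_mono m h)

lemma bp_top (m : ℕ) : binPartial m (m+1) = 2^m := by
  unfold binPartial; rw [Nat.sum_range_choose]

lemma bp_m (m : ℕ) : binPartial m m + 1 = 2^m := by
  have := bp_top m
  rw [bp_succ, Nat.choose_self] at this; omega

lemma wBt_le (m y : ℕ) : wBt m y ≤ m + 1 := Nat.findGreatest_le _

lemma wBt_spec (m y : ℕ) : binPartial m (wBt m y) ≤ y := by
  have h0 : binPartial m 0 ≤ y := by simp [binPartial]
  exact Nat.findGreatest_spec (P := fun t => binPartial m t ≤ y) (m := 0) (Nat.zero_le _) h0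

lemma wBt_max {m y t : ℕ} (h : binPartial m t ≤ y) (ht : t ≤ m + 1) : t ≤ wBt m y :=
  Nat.le_findGreatest ht h

lemma wBt_eq_of {m y t : ℕ} (h1 : binPartial m t ≤ y) (h2 : y < binPartial m (t+1))
    (ht : t ≤ m + 1) : wBt m y = t := by
  refine le_antisymm ?_ (wBt_max h1 ht)
  by_contra hlt
  push_neg at hlt
  have h4 : binPartial m (t+1) ≤ binPartial m (wBt m y) := bp_mono m (by omega)
  have h5 := wBt_spec m y
  omega

lemma wBt_lt_top {m y : ℕ} (hy : y < 2^m) : wBt m y ≤ m := by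
  by_contra h
  push_neg at h
  have h1 : wBt m y = m + 1 := le_antisymm (wBt_le m y) h
  have := wBt_spec m y
  rw [h1, bp_top] at this; omega

lemma wBt_gt {m y : ℕ} (hy : y < 2^m) : y < binPartial m (wBt m y + 1) := by
  by_contra h
  push_neg at h
  have := wBt_max h (by have := wBt_lt_top hy; omega)
  omega

lemma wB_step (m y : ℕ) (hy : y < 2^m) : wB m (y+1) = wB m y + (m - wBt m y) := by
  obtain ⟨t, ht⟩ : ∃ t, wBt m y = t := ⟨_, rfl⟩
  have htm : t ≤ m := ht ▸ wBt_lt_top hy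
  have h1 : binPartial m t ≤ y := ht ▸ wBt_spec m y
  have h2 : y < binPartial m (t+1) := by have := wBt_gt hy; rwa [ht] at this
  rw [ht]
  rcases lt_or_eq_of_le (Nat.succ_le_of_lt h2) with h3 | h3
  · -- y + 1 < binPartial m (t+1): wBt stays t
    have ht' : wBt m (y+1) = t := wBt_eq_of (le_trans h1 (Nat.le_succ y)) h3 (by omega)
    unfold wB
    rw [ht', ht]
    have he : y + 1 - binPartial m t = (y - binPartial m t) + 1 := by omega
    rw [he, Nat.add_mul, one_mul]
    ring
  · -- y + 1 = binPartial m (t+1)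
    have hc : 1 ≤ Nat.choose m t := Nat.choose_pos htm
    obtain ⟨cc, hcc⟩ : ∃ cc, Nat.choose m t = cc + 1 := ⟨Nat.choose m t - 1, by omega⟩
    have hsub : y - binPartial m t = cc := by
      have := bp_succ m t; omega
    by_cases htm' : m = t
    · -- then y+1 = 2^m, wBt (y+1) = m+1
      subst htm'
      have hy1 : y + 1 = 2^m := by
        have hb := bp_top m
        have hbs := bp_succ m m
        rw [Nat.choose_self] at hbs
        have hbm := bp_m m
        omega
      have ht' : wBt m (y+1) = m + 1 := by
        refine le_antisymm (wBt_le _ _) (wBt_max ?_ le_rfl)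
        rw [bp_top]; omega
      unfold wB
      rw [ht', ht]
      rw [Finset.sum_range_succ]
      have hz : y + 1 - binPartial m (m+1) = 0 := by rw [bp_top]; omega
      rw [hz, zero_mul, add_zero]
      simp
    · have htm2 : t < m := lt_of_le_of_ne htm (fun h => htm' h.symm)
      have ht' : wBt m (y+1) = t + 1 := by
        refine wBt_eq_of (by omega) ?_ (by omega)
        rw [bp_succ m (t+1)]
        have : 1 ≤ Nat.choose m (t+1) := Nat.choose_pos (by omega)
        omega
      unfold wB
      rw [ht', ht]
      rw [Finset.sum_range_succ]
      have h5 : y + 1 - binPartial m (t+1) = 0 := by omega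
      rw [h5, zero_mul, add_zero, hsub, hcc]
      have h6 : cc * (m - t) + (m - t) = (cc + 1) * (m - t) := by ring
      rw [add_assoc, h6, mul_comm]

lemma wBt_zero (m : ℕ) : wBt m 0 = 0 :=
  wBt_eq_of (by simp [binPartial]) (by simp [binPartial, bp_succ]) (by omega)

lemma wB_zero (m : ℕ) : wB m 0 = 0 := by
  unfold wB
  rw [wBt_zero]
  simp

lemma wB_eq_sum (m : ℕ) {y : ℕ} (hy : y ≤ 2^m) :
    wB m y = ∑ z ∈ Finset.range y, (m - wBt m z) := by
  induction y with
  | zero => simpa using wB_zero m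
  | succ n ih =>
    rw [Finset.sum_range_succ, ← ih (by omega), wB_step m n (by omega)]

lemma wBt_bp {m jn : ℕ} (hjn : jn ≤ m) : wBt m (binPartial m jn) = jn :=
  wBt_eq_of le_rfl (bp_lt m (Nat.lt_succ_self jn) hjn) (by omega)

lemma wB_bp {m jn : ℕ} (hjn : jn ≤ m) :
    wB m (binPartial m jn) = ∑ i ∈ Finset.range jn, (m - i) * Nat.choose m i := by
  unfold wB
  rw [wBt_bp hjn]
  simp

lemma bp_le_pow {m jn : ℕ} (hjn : jn ≤ m) : binPartial m jn < 2^m := by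
  calc binPartial m jn ≤ binPartial m m := bp_mono m hjn
  _ < 2^m := by have := bp_m m; omega

lemma wB_bp_succ {m jn : ℕ} (hjn : jn ≤ m) :
    wB m (binPartial m jn + 1)
      = (∑ i ∈ Finset.range jn, (m - i) * Nat.choose m i) + (m - jn) := by
  rw [wB_step m _ (bp_le_pow hjn), wBt_bp hjn, wB_bp hjn]

lemma wBt_lt_of_lt_bp {m jn y : ℕ} (h : y < binPartial m jn) : wBt m y < jn := by
  by_contra hc
  push_neg at hc
  exact absurd (le_trans (bp_mono m hc) (wBt_spec m y)) (by omega)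

lemma wB_le_of_le_aux {m jn : ℕ} (hjn : jn ≤ m) :
    ∀ d y, y ≤ binPartial m jn → binPartial m jn - y = d →
      wB m y + (binPartial m jn - y) * (m + 1 - jn) ≤ wB m (binPartial m jn) := by
  intro d
  induction d with
  | zero =>
    intro y h1 h2
    have : y = binPartial m jn := by omega
    subst this
    simp
  | succ n ih =>
    intro y h1 h2
    have hyY : y < binPartial m jn := by omega
    have hstep : wB m (y+1) = wB m y + (m - wBt m y) :=
      wB_step m y (lt_trans hyY (bp_le_pow hjn))
    have hwbt : wBt m y < jn := wBt_lt_of_lt_bp hyY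
    have hincr : m + 1 - jn ≤ m - wBt m y := by omega
    have hrec := ih (y+1) (by omega) (by omega)
    have he : binPartial m jn - y = (binPartial m jn - (y+1)) + 1 := by omega
    rw [he, Nat.add_mul, one_mul]
    omega

lemma wB_le_of_le {m jn : ℕ} (hjn : jn ≤ m) {y : ℕ} (hy : y ≤ binPartial m jn) :
    wB m y + (binPartial m jn - y) * (m + 1 - jn) ≤ wB m (binPartial m jn) :=
  wB_le_of_le_aux hjn _ y hy rfl

open Finset in
lemma card_lt_filter (m t : ℕ) :
    ((univ : Finset (Finset (Fin m))).filter (fun S => S.card < t)).card ≤ binPartial m t := by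
  classical
  have heq : (univ : Finset (Finset (Fin m))).filter (fun S => S.card < t)
      = (range t).biUnion (fun k => powersetCard k (univ : Finset (Fin m))) := by
    ext S
    simp only [mem_filter, mem_univ, true_and, mem_biUnion, mem_range,
      Finset.mem_powersetCard_univ]
    constructor
    · intro h; exact ⟨S.card, h, rfl⟩
    · rintro ⟨k, hk, rfl⟩; exact hk
  rw [heq]
  calc ((range t).biUnion fun k => powersetCard k (univ : Finset (Fin m))).card
      ≤ ∑ k ∈ range t, (powersetCard k (univ : Finset (Fin m))).card :=
        Finset.card_biUnion_le
  _ = binPartial m t := by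
      unfold binPartial
      refine Finset.sum_congr rfl fun k _ => ?_
      rw [Finset.card_powersetCard, Finset.card_univ, Fintype.card_fin]

open Finset in
lemma sum_card_le (m : ℕ) (F : Finset (Finset (Fin m))) :
    ∑ S ∈ F, S.card ≤ wB m F.card := by
  classical
  obtain ⟨n, hn⟩ : ∃ n, F.card = n := ⟨_, rfl⟩
  induction n generalizing F with
  | zero =>
    have : F = ∅ := Finset.card_eq_zero.mp hn
    subst this
    simp [wB_zero]
  | succ n ih =>
    have hFle : F.card ≤ 2^m := by
      have := Finset.card_le_univ F
      rwa [Fintype.card_finset, Fintype.card_fin] at this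
    have hex : ∃ S ∈ F, S.card ≤ m - wBt m n := by
      by_contra hno
      push_neg at hno
      have hsub : F ⊆ (univ : Finset (Finset (Fin m))).filter
          (fun S => m - wBt m n < S.card) := by
        intro S hS
        simp only [mem_filter, mem_univ, true_and]
        exact hno S hS
      have hcard := Finset.card_le_card hsub
      have hinj : ((univ : Finset (Finset (Fin m))).filter
            (fun S => m - wBt m n < S.card)).card
          ≤ ((univ : Finset (Finset (Fin m))).filter (fun S => S.card < wBt m n)).card := by
        apply Finset.card_le_card_of_injOn (fun S => Sᶜ)
        · intro S hS
          simp only [Finset.mem_coe, mem_filter, mem_univ, true_and] at hS ⊢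
          have h1 : S.card ≤ m := by
            have := Finset.card_le_univ S
            rwa [Fintype.card_fin] at this
          have htm : wBt m n ≤ m := wBt_lt_top (by omega)
          rw [Finset.card_compl, Fintype.card_fin]
          omega
        · intro a _ b _ h
          have := congrArg (fun S => Sᶜ) h
          simpa using this
      have hflt := card_lt_filter m (wBt m n)
      have hbp : binPartial m (wBt m n) ≤ n := wBt_spec m n
      omega
    obtain ⟨S0, hS0, hS0c⟩ := hex
    have hstep : wB m (n+1) = wB m n + (m - wBt m n) := wB_step m n (by omega)
    have hce : (F.erase S0).card = n := by rw [Finset.card_erase_of_mem hS0, hn]; omega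
    have hsum := ih (F.erase S0) hce
    rw [hce] at hsum
    have hsplit : ∑ S ∈ F, S.card = S0.card + ∑ S ∈ F.erase S0, S.card :=
      (Finset.add_sum_erase F _ hS0).symm
    rw [hn, hstep, hsplit]
    omega


section Helpers

variable {m1 n1 m2 n2 : ℕ} {P : Set (Set (MPV m1 n1 m2 n2))}

lemma incTG_adj_iff {p : ↥P} {e : Fin m1} :
    (incTG P).Adj (Sum.inl p) (Sum.inr e) ↔ tauInc' P p e := by
  rw [incTG, SimpleGraph.fromRel_adj]
  constructor
  · rintro ⟨-, ⟨p', j', hp, hj, h⟩ | ⟨p', j', hp, hj, h⟩⟩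
    · rw [Sum.inl.injEq] at hp
      rw [Sum.inr.injEq] at hj
      subst hp; subst hj; exact h
    · exact absurd hp (by simp)
  · intro h
    exact ⟨by simp, Or.inl ⟨p, e, rfl, rfl, h⟩⟩

lemma incTG_adj_shape {x y : ↥P ⊕ Fin m1} (h : (incTG P).Adj x y) :
    (∃ p e, x = Sum.inl p ∧ y = Sum.inr e ∧ tauInc' P p e) ∨
    (∃ p e, x = Sum.inr e ∧ y = Sum.inl p ∧ tauInc' P p e) := by
  rw [incTG, SimpleGraph.fromRel_adj] at h
  rcases h.2 with ⟨p, e, h1, h2, h3⟩ | ⟨p, e, h1, h2, h3⟩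
  · exact Or.inl ⟨p, e, h1, h2, h3⟩
  · exact Or.inr ⟨p, e, h2, h1, h3⟩

lemma exists_inc_of_reach {p : ↥P} {x : ↥P ⊕ Fin m1}
    (h : (incTG P).Reachable (Sum.inl p) x) (hne : Sum.inl p ≠ x) :
    ∃ e, tauInc' P p e := by
  obtain ⟨w⟩ := h
  cases w with
  | nil => exact absurd rfl hne
  | cons h1 q =>
    rcases incTG_adj_shape h1 with ⟨p', e, hx, hy, h3⟩ | ⟨p', e, hx, hy, h3⟩
    · rw [Sum.inl.injEq] at hx
      subst hx
      exact ⟨e, h3⟩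
    · exact absurd hx (by simp)

lemma exists_deg2_vertex {e e' : Fin m1} (hne : e ≠ e')
    (h : (incTG P).Reachable (Sum.inr e) (Sum.inr e')) :
    ∃ p, tauInc' P p e ∧ ∃ f, f ≠ e ∧ tauInc' P p f := by
  classical
  obtain ⟨w0⟩ := h
  have hpath : (w0.bypass).IsPath := SimpleGraph.Walk.bypass_isPath w0
  set w := w0.bypass with hw
  clear_value w
  cases w with
  | nil => exact absurd rfl hne
  | cons h1 q =>
    rcases incTG_adj_shape h1 with ⟨p, f, hx, hy, h3⟩ | ⟨p, f, hx, hy, h3⟩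
    · exact absurd hx (by simp)
    · rw [Sum.inr.injEq] at hx
      subst hx
      subst hy
      cases q with
      | cons h2 q2 =>
        rcases incTG_adj_shape h2 with ⟨p', f2, hx2, hy2, h4⟩ | ⟨p', f2, hx2, hy2, h4⟩
        · rw [Sum.inl.injEq] at hx2
          subst hx2
          subst hy2
          refine ⟨p, h3, f2, ?_, h4⟩
          have hnd := hpath.support_nodup
          rw [SimpleGraph.Walk.support_cons, List.nodup_cons] at hnd
          intro hfe
          subst hfe
          exact hnd.1 (by
            rw [SimpleGraph.Walk.support_cons]
            exact List.mem_cons_of_mem _ (SimpleGraph.Walk.start_mem_support q2))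
        · exact absurd hx2 (by simp)

end Helpers

section Helpers2

variable {m1 n1 m2 n2 : ℕ} {P : Set (Set (MPV m1 n1 m2 n2))}

lemma card_parts_of_edge (hreg : IsRegularPartition P) (e : Fin m1) :
    {p : ↥P | tauInc' P p e}.ncard = n1 := by
  classical
  haveI : Fintype ↥P := Fintype.ofFinite _
  have hfin : {p : ↥P | tauInc' P p e}.Finite := Set.toFinite _
  rw [Set.ncard_eq_toFinset_card _ hfin]
  have hpart := hreg.1.2
  have hfun : ∀ a : Fin n1, ∃ p : ↥P, (Sum.inl (e, a) : MPV m1 n1 m2 n2) ∈ p.1 := by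
    intro a
    obtain ⟨b, hb, -⟩ := hpart (Sum.inl (e, a))
    exact ⟨⟨b, hb.1⟩, hb.2⟩
  choose f hf using hfun
  have huniv : (Finset.univ : Finset (Fin n1)).card = n1 := by simp
  refine ((Finset.card_bij (fun a _ => f a) ?_ ?_ ?_).symm.trans huniv)
  · intro a _
    rw [Set.Finite.mem_toFinset]
    exact ⟨Sum.inl (e, a), hf a, rfl⟩
  · intro a ha a' ha' hfeq
    have hsub := hreg.2 (f a).1 (f a).2 (Sum.inl e)
    have h1 : (Sum.inl (e, a) : MPV m1 n1 m2 n2) ∈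
        {v | v ∈ (f a).1 ∧ partOf v = Sum.inl e} := ⟨hf a, rfl⟩
    have h2 : (Sum.inl (e, a') : MPV m1 n1 m2 n2) ∈
        {v | v ∈ (f a).1 ∧ partOf v = Sum.inl e} := by
      refine ⟨?_, rfl⟩
      have hfeq' : f a = f a' := hfeq
      rw [hfeq']
      exact hf a'
    have h3 := hsub h1 h2
    simpa using h3
  · intro p hp
    rw [Set.Finite.mem_toFinset] at hp
    obtain ⟨v, hv, hpv⟩ := hp
    cases v with
    | inl x =>
      obtain ⟨e0, a⟩ := x
      have he0 : e0 = e := by simpa [partOf] using hpv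
      subst he0
      refine ⟨a, Finset.mem_univ a, ?_⟩
      obtain ⟨b, hb, huniq⟩ := hpart (Sum.inl (e0, a))
      have h1 : (f a).1 = b := huniq _ ⟨(f a).2, hf a⟩
      have h2 : p.1 = b := huniq _ ⟨p.2, hv⟩
      exact Subtype.ext (h1.trans h2.symm)
    | inr x => simp [partOf] at hpv

lemma label_inj (hasym : HypAsymmetric (tauInc P)) {e : Fin m1} {p q : ↥P}
    (hp : tauInc' P p e) (hp1 : degE P p = 1) (hq : tauInc' P q e) (hq1 : degE P q = 1)
    (hlab : labelOf P p = labelOf P q) : p = q := by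
  classical
  by_contra hne
  have honly : ∀ x : ↥P, tauInc' P x e → degE P x = 1 → ∀ f, tauInc' P x f ↔ f = e := by
    intro x hxe hx1 f
    obtain ⟨a, ha⟩ := Set.ncard_eq_one.mp hx1
    constructor
    · intro hfx
      have h1 : f ∈ {j | tauInc' P x j} := hfx
      have h2 : e ∈ {j | tauInc' P x j} := hxe
      rw [ha] at h1 h2
      simp only [Set.mem_singleton_iff] at h1 h2
      rw [h1, h2]
    · rintro rfl
      exact hxe
  have hiff : ∀ (x : ↥P) (i : Fin m1 ⊕ Fin m2),
      tauInc P x i ↔ tauInc P ((Equiv.swap p q) x) ((1 : Equiv.Perm (Fin m1 ⊕ Fin m2)) i) := by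
    intro x i
    simp only [Equiv.Perm.coe_one, id_eq]
    by_cases hxp : x = p
    · subst hxp
      rw [Equiv.swap_apply_left]
      cases i with
      | inl f =>
        show tauInc' P x f ↔ tauInc' P q f
        rw [honly x hp hp1 f, honly q hq hq1 f]
      | inr i2 => exact Set.ext_iff.mp hlab i2
    · by_cases hxq : x = q
      · subst hxq
        rw [Equiv.swap_apply_right]
        cases i with
        | inl f =>
          show tauInc' P x f ↔ tauInc' P p f
          rw [honly x hq hq1 f, honly p hp hp1 f]
        | inr i2 => exact Set.ext_iff.mp hlab.symm i2
      · rw [Equiv.swap_apply_of_ne_of_ne hxp hxq]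
  have hswap := (hasym (Equiv.swap p q) 1 hiff).1
  apply hne
  have h := congrArg (fun σ : Equiv.Perm ↥P => σ p) hswap
  simpa [Equiv.swap_apply_left] using h.symm

end Helpers2

set_option maxHeartbeats 2000000 in
/-- **Lemma 4.7.** Suppose `k_{n1,m2} = 0` with `j = j_{n1,m2}` (an integer `≥ -1`), so
`r = 1 + Σ_{i=0}^{j} ((m2-i)/m2)·C(m2,i)`.  Let `τ(P)` be asymmetric and let `G` be a
connected component of `τ'(P)` that is a tree with at least `2` edges, with `l` leaves
and `d = d(G)` defects.  Then `v(G) = w(G) - r·m2·|E(G)| ≤ m2 - 2j - l - j·μ(G) - d`. -/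
theorem tree_component_value_bound
    (m1 n1 m2 n2 : ℕ) (hn1 : 2 ≤ n1) (hm2 : 1 ≤ m2)
    (j : ℤ) (r : ℝ)
    (hj : -1 ≤ j)
    (hjk : (n1 : ℤ) = 2 + ∑ i ∈ Finset.range (j + 1).toNat, (Nat.choose m2 i : ℤ))
    (hcond : (j < (((m2 - 1) / 2 : ℕ) : ℤ) ∧ (0 : ℤ) < Nat.choose m2 (j + 1).toNat)
      ∨ j = (((m2 - 1) / 2 : ℕ) : ℤ))
    (hr : r = 1 + ∑ i ∈ Finset.range (j + 1).toNat, ((m2 - i : ℝ) / m2) * Nat.choose m2 i)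
    (P : Set (Set (MPV m1 n1 m2 n2)))
    (hreg : IsRegularPartition P) (hasym : HypAsymmetric (tauInc P))
    (c : (incTG P).ConnectedComponent)
    (htree : (compV P c).ncard = (n1 - 1) * (compE P c).ncard + 1)
    (h2 : 2 ≤ (compE P c).ncard)
    (l d : ℕ)
    (hl : l = {e ∈ compE P c | deg1E P e = n1 - 1}.ncard)
    (hd : d = dComp P c) :
    (wComp P c : ℝ) - r * m2 * (compE P c).ncard
      ≤ (m2 : ℝ) - 2 * j - l - j * (muComp P c) - d := by
  classical
  haveI : Fintype ↥P := Fintype.ofFinite _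
  -- Finset versions of the component vertex and edge sets
  obtain ⟨VT, hVT⟩ : ∃ VT : Finset ↥P, ↑VT = compV P c :=
    ⟨(Set.toFinite (compV P c)).toFinset, Set.Finite.coe_toFinset _⟩
  obtain ⟨ET, hET⟩ : ∃ ET : Finset (Fin m1), ↑ET = compE P c :=
    ⟨(Set.toFinite (compE P c)).toFinset, Set.Finite.coe_toFinset _⟩
  have hVTmem : ∀ p : ↥P, p ∈ VT ↔ (incTG P).connectedComponentMk (Sum.inl p) = c := by
    intro p
    rw [← Finset.mem_coe, hVT]
    rfl
  have hETmem : ∀ e : Fin m1, e ∈ ET ↔ (incTG P).connectedComponentMk (Sum.inr e) = c := by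
    intro e
    rw [← Finset.mem_coe, hET]
    rfl
  -- Finset versions of edges-of-a-vertex and vertices-of-an-edge
  obtain ⟨DG, hDGmem⟩ : ∃ DG : ↥P → Finset (Fin m1), ∀ p f, f ∈ DG p ↔ tauInc' P p f :=
    ⟨fun p => (Set.toFinite {f : Fin m1 | tauInc' P p f}).toFinset,
      fun p f => by rw [Set.Finite.mem_toFinset]; rfl⟩
  obtain ⟨NE, hNEmem⟩ : ∃ NE : Fin m1 → Finset ↥P, ∀ e p, p ∈ NE e ↔ tauInc' P p e :=
    ⟨fun e => (Set.toFinite {p : ↥P | tauInc' P p e}).toFinset,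
      fun e p => by rw [Set.Finite.mem_toFinset]; rfl⟩
  obtain ⟨D, hDmem⟩ : ∃ D : Fin m1 → Finset ↥P,
      ∀ e p, p ∈ D e ↔ (tauInc' P p e ∧ degE P p = 1) :=
    ⟨fun e => (Set.toFinite {p : ↥P | tauInc' P p e ∧ degE P p = 1}).toFinset,
      fun e p => by rw [Set.Finite.mem_toFinset]; rfl⟩
  have hdeg : ∀ p : ↥P, degE P p = (DG p).card := by
    intro p
    rw [degE, ← Set.ncard_coe_finset]
    congr 1
    ext f
    simp [hDGmem]
  have hNEcard : ∀ e, (NE e).card = n1 := by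
    intro e
    have hco : ((NE e : Finset ↥P) : Set ↥P) = {p : ↥P | tauInc' P p e} := by
      ext p
      simp [hNEmem]
    rw [← Set.ncard_coe_finset, hco, card_parts_of_edge hreg e]
  have hDset : ∀ e, {p : ↥P | tauInc' P p e ∧ degE P p = 1} = ↑(D e) := by
    intro e
    ext p
    simp [hDmem]
  have hdeg1 : ∀ e, deg1E P e = (D e).card := by
    intro e
    rw [deg1E, hDset, Set.ncard_coe_finset]
  have hwSEeq : ∀ e, wSE P e = ∑ p ∈ D e, wtv P p := by
    intro e
    rw [wSE, hDset, finsum_mem_coe_finset]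
  have hwCompeq : wComp P c = ∑ p ∈ VT, wtv P p := by
    rw [wComp, ← hVT, finsum_mem_coe_finset]
  have hmueq : muComp P c = ∑ p ∈ VT, (degE P p - 2) := by
    rw [muComp, ← hVT, finsum_mem_coe_finset]
  -- transfer of component membership along incidence
  have hmemVE : ∀ {p : ↥P} {e : Fin m1}, tauInc' P p e → (p ∈ VT ↔ e ∈ ET) := by
    intro p e h
    rw [hVTmem, hETmem,
      SimpleGraph.ConnectedComponent.eq.mpr (incTG_adj_iff.mpr h).reachable]
  have hEcard : (compE P c).ncard = ET.card := by rw [← hET, Set.ncard_coe_finset]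
  have hVcard : (compV P c).ncard = VT.card := by rw [← hVT, Set.ncard_coe_finset]
  have h2E : 2 ≤ ET.card := by rw [← hEcard]; exact h2
  -- every vertex of the component has degree at least 1
  have hdegpos : ∀ p ∈ VT, 1 ≤ degE P p := by
    intro p hp
    obtain ⟨e0, he0⟩ : ET.Nonempty := Finset.card_pos.mp (by omega)
    have hreach : (incTG P).Reachable (Sum.inl p) (Sum.inr e0) :=
      SimpleGraph.ConnectedComponent.eq.mp
        (((hVTmem p).mp hp).trans ((hETmem e0).mp he0).symm)
    obtain ⟨e, he⟩ := exists_inc_of_reach hreach (by simp)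
    rw [hdeg p]
    exact Finset.card_pos.mpr ⟨e, (hDGmem p e).mpr he⟩
  -- every edge of the component has a vertex of degree ≥ 2
  have hdeg2e : ∀ e ∈ ET, ∃ p, tauInc' P p e ∧ 2 ≤ degE P p := by
    intro e he
    obtain ⟨e', he', hne'⟩ : ∃ e' ∈ ET, e' ≠ e := by
      obtain ⟨x, hx, y, hy, hxy⟩ := Finset.one_lt_card.mp (by omega : 1 < ET.card)
      by_cases hxe : x = e
      · subst hxe
        exact ⟨y, hy, fun hh => hxy hh.symm⟩
      · exact ⟨x, hx, hxe⟩
    have hreach : (incTG P).Reachable (Sum.inr e) (Sum.inr e') :=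
      SimpleGraph.ConnectedComponent.eq.mp
        (((hETmem e).mp he).trans ((hETmem e').mp he').symm)
    obtain ⟨p, hpe, f, hfne, hpf⟩ := exists_deg2_vertex (fun hh => hne' hh.symm) hreach
    refine ⟨p, hpe, ?_⟩
    rw [hdeg p]
    exact Finset.one_lt_card.mpr
      ⟨f, (hDGmem p f).mpr hpf, e, (hDGmem p e).mpr hpe, hfne⟩
  -- incidence double counting
  have hDGfil : ∀ p ∈ VT, DG p = ET.filter (fun e => tauInc' P p e) := by
    intro p hp
    ext f
    simp only [Finset.mem_filter, hDGmem]
    constructor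
    · intro h
      exact ⟨(hmemVE h).mp hp, h⟩
    · exact fun h => h.2
  have hNEfil : ∀ e ∈ ET, NE e = VT.filter (fun p => tauInc' P p e) := by
    intro e he
    ext p
    simp only [Finset.mem_filter, hNEmem]
    constructor
    · intro h
      exact ⟨(hmemVE h).mpr he, h⟩
    · exact fun h => h.2
  have hdouble : ∑ p ∈ VT, degE P p = n1 * ET.card := by
    calc ∑ p ∈ VT, degE P p
        = ∑ p ∈ VT, ∑ e ∈ ET, (if tauInc' P p e then 1 else 0) := by
          refine Finset.sum_congr rfl fun p hp => ?_
          rw [hdeg p, hDGfil p hp, Finset.card_filter]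
    _ = ∑ e ∈ ET, ∑ p ∈ VT, (if tauInc' P p e then 1 else 0) := Finset.sum_comm
    _ = ∑ e ∈ ET, n1 := by
          refine Finset.sum_congr rfl fun e he => ?_
          rw [← Finset.card_filter, ← hNEfil e he, hNEcard]
    _ = n1 * ET.card := by rw [Finset.sum_const, smul_eq_mul, mul_comm]
  -- split the component vertices by degree
  set VT1 := VT.filter (fun p => degE P p = 1) with hVT1
  set VT2 := VT.filter (fun p => 2 ≤ degE P p) with hVT2
  have hVTsplit : ∀ (f : ↥P → ℕ), ∑ p ∈ VT, f p = ∑ p ∈ VT1, f p + ∑ p ∈ VT2, f p := by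
    intro f
    rw [hVT1, hVT2, ← Finset.sum_filter_add_sum_filter_not VT (fun p => degE P p = 1) f]
    congr 1
    apply Finset.sum_congr ?_ (fun _ _ => rfl)
    ext p
    simp only [Finset.mem_filter]
    exact and_congr_right fun hp => by have := hdegpos p hp; omega
  have hcards : VT.card = VT1.card + VT2.card := by
    have h := hVTsplit (fun _ => 1)
    rw [Finset.card_eq_sum_ones VT, Finset.card_eq_sum_ones VT1,
      Finset.card_eq_sum_ones VT2]
    exact h
  -- degree-one vertices are partitioned among the edges
  have hdisjD : ∀ e ∈ ET, ∀ e' ∈ ET, e ≠ e' → Disjoint (D e) (D e') := by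
    intro e _ e' _ hne
    rw [Finset.disjoint_left]
    intro p hp hp'
    obtain ⟨h1, hdeg1p⟩ := (hDmem e p).mp hp
    obtain ⟨h2', -⟩ := (hDmem e' p).mp hp'
    have h2d : 2 ≤ degE P p := by
      rw [hdeg p]
      exact Finset.one_lt_card.mpr ⟨e, (hDGmem p e).mpr h1, e', (hDGmem p e').mpr h2', hne⟩
    omega
  have hbiU : VT1 = ET.biUnion D := by
    ext p
    simp only [Finset.mem_biUnion, hVT1, Finset.mem_filter, hDmem]
    constructor
    · rintro ⟨hpVT, hdeg1p⟩
      obtain ⟨f, hf⟩ : (DG p).Nonempty := by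
        apply Finset.card_pos.mp
        rw [← hdeg p]
        omega
      have hpf := (hDGmem p f).mp hf
      exact ⟨f, (hmemVE hpf).mp hpVT, hpf, hdeg1p⟩
    · rintro ⟨e, heET, hpe, hdeg1p⟩
      exact ⟨(hmemVE hpe).mpr heET, hdeg1p⟩
  have hV1sum : ∀ (f : ↥P → ℕ), ∑ p ∈ VT1, f p = ∑ e ∈ ET, ∑ p ∈ D e, f p := by
    intro f
    rw [hbiU]
    exact Finset.sum_biUnion (fun x hx y hy hxy => hdisjD x hx y hy hxy)
  have hV1card : VT1.card = ∑ e ∈ ET, (D e).card := by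
    have h := hV1sum (fun _ => 1)
    rw [Finset.card_eq_sum_ones VT1, h]
    exact Finset.sum_congr rfl fun e _ => (Finset.card_eq_sum_ones (D e)).symm
  have hV1w : ∑ p ∈ VT1, wtv P p = ∑ e ∈ ET, wSE P e := by
    rw [hV1sum (wtv P)]
    exact Finset.sum_congr rfl fun e _ => (hwSEeq e).symm
  have hV1deg : ∑ p ∈ VT1, degE P p = VT1.card := by
    rw [Finset.card_eq_sum_ones]
    refine Finset.sum_congr rfl fun p hp => ?_
    rw [hVT1, Finset.mem_filter] at hp
    exact hp.2
  -- mu over degree ≥ 2 vertices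
  have hmu2 : muComp P c = ∑ p ∈ VT2, (degE P p - 2) := by
    rw [hmueq, hVTsplit (fun p => degE P p - 2)]
    have h0 : ∑ p ∈ VT1, (degE P p - 2) = 0 := by
      apply Finset.sum_eq_zero
      intro p hp
      rw [hVT1, Finset.mem_filter] at hp
      omega
    omega
  have hS2 : ∑ p ∈ VT2, degE P p = muComp P c + 2 * VT2.card := by
    rw [hmu2]
    calc ∑ p ∈ VT2, degE P p = ∑ p ∈ VT2, ((degE P p - 2) + 2) := by
          refine Finset.sum_congr rfl fun p hp => ?_
          rw [hVT2, Finset.mem_filter] at hp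
          omega
    _ = ∑ p ∈ VT2, (degE P p - 2) + ∑ p ∈ VT2, 2 := Finset.sum_add_distrib
    _ = ∑ p ∈ VT2, (degE P p - 2) + 2 * VT2.card := by
          rw [Finset.sum_const, smul_eq_mul, mul_comm]
  -- weights are at most m2
  have hwle : ∀ p : ↥P, wtv P p ≤ m2 := by
    intro p
    have h := Set.ncard_le_ncard (Set.subset_univ (labelOf P p)) (Set.toFinite _)
    rw [wtv]
    simpa [Set.ncard_univ] using h
  have hV2w : ∑ p ∈ VT2, wtv P p + ∑ p ∈ VT2, (m2 - wtv P p) = m2 * VT2.card := by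
    rw [← Finset.sum_add_distrib]
    calc ∑ p ∈ VT2, (wtv P p + (m2 - wtv P p)) = ∑ p ∈ VT2, m2 :=
          Finset.sum_congr rfl fun p _ => by have := hwle p; omega
    _ = m2 * VT2.card := by rw [Finset.sum_const, smul_eq_mul, mul_comm]
  -- defect bound on each edge, via asymmetry
  have hwSEle : ∀ e : Fin m1, wSE P e ≤ wB m2 (deg1E P e) := by
    intro e
    rw [hwSEeq e, hdeg1 e]
    set lab : ↥P → Finset (Fin m2) := fun p => (Set.toFinite (labelOf P p)).toFinset
      with hlabdef
    have hwtv : ∀ p, wtv P p = (lab p).card := fun p => Set.ncard_eq_toFinset_card _ _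
    have hinj : ∀ p ∈ D e, ∀ q ∈ D e, lab p = lab q → p = q := by
      intro p hp q hq hpq
      obtain ⟨hpe, hp1⟩ := (hDmem e p).mp hp
      obtain ⟨hqe, hq1⟩ := (hDmem e q).mp hq
      apply label_inj hasym hpe hp1 hqe hq1
      have hco := congrArg (fun s : Finset (Fin m2) => (s : Set (Fin m2))) hpq
      simpa [hlabdef, Set.Finite.coe_toFinset] using hco
    calc ∑ p ∈ D e, wtv P p = ∑ p ∈ D e, (lab p).card :=
          Finset.sum_congr rfl fun p _ => hwtv p
    _ = ∑ S ∈ (D e).image lab, S.card := (Finset.sum_image hinj).symm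
    _ ≤ wB m2 ((D e).image lab).card := sum_card_le m2 _
    _ = wB m2 (D e).card := by
          rw [Finset.card_image_of_injOn fun p hp q hq => hinj p hp q hq]
  -- defects in Finset form
  have hdeq : d = ∑ p ∈ VT2, (m2 - wtv P p)
      + ∑ e ∈ ET, (wB m2 (deg1E P e) - wSE P e) := by
    rw [hd, dComp]
    congr 1
    · have hco : {p | p ∈ compV P c ∧ 2 ≤ degE P p} = ↑VT2 := by
        rw [hVT2, Finset.coe_filter]
        ext p
        simp [← hVT]
      rw [hco, finsum_mem_coe_finset]
    · rw [← hET, finsum_mem_coe_finset]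
  have hedgesum : ∑ e ∈ ET, wSE P e + ∑ e ∈ ET, (wB m2 (deg1E P e) - wSE P e)
      = ∑ e ∈ ET, wB m2 (deg1E P e) := by
    rw [← Finset.sum_add_distrib]
    exact Finset.sum_congr rfl fun e _ => by have := hwSEle e; omega
  -- leaves
  set ETL := ET.filter (fun e => deg1E P e = n1 - 1) with hETL
  set ETN := ET.filter (fun e => ¬ deg1E P e = n1 - 1) with hETN
  have hETsplit : ∀ (f : Fin m1 → ℕ), ∑ e ∈ ET, f e = ∑ e ∈ ETL, f e + ∑ e ∈ ETN, f e :=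
    fun f => (Finset.sum_filter_add_sum_filter_not ET _ f).symm
  have hEcards : ET.card = ETL.card + ETN.card := by
    have h := hETsplit (fun _ => 1)
    rw [Finset.card_eq_sum_ones ET, Finset.card_eq_sum_ones ETL,
      Finset.card_eq_sum_ones ETN]
    exact h
  have hl' : l = ETL.card := by
    have hco : {e | e ∈ compE P c ∧ deg1E P e = n1 - 1} = ↑ETL := by
      rw [hETL, Finset.coe_filter]
      ext e
      simp [← hET]
    rw [hl, hco, Set.ncard_coe_finset]
  have hyle : ∀ e ∈ ET, deg1E P e ≤ n1 - 1 := by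
    intro e he
    obtain ⟨p0, hp0e, hp0d⟩ := hdeg2e e he
    have hp0NE : p0 ∈ NE e := (hNEmem e p0).mpr hp0e
    have hsubD : D e ⊆ (NE e).erase p0 := by
      intro p hp
      obtain ⟨hpe, hp1⟩ := (hDmem e p).mp hp
      refine Finset.mem_erase.mpr ⟨?_, (hNEmem e p).mpr hpe⟩
      rintro rfl
      omega
    have hle := Finset.card_le_card hsubD
    rw [Finset.card_erase_of_mem hp0NE, hNEcard] at hle
    rw [hdeg1]
    exact hle
  -- arithmetic setup
  set jn := (j + 1).toNat with hjndef
  have hjZ : (jn : ℤ) = j + 1 := Int.toNat_of_nonneg (by omega)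
  have hjnm2 : jn ≤ m2 := by
    rcases hcond with ⟨hlt, hpos⟩ | heq
    · by_contra hgt
      push_neg at hgt
      rw [Nat.choose_eq_zero_of_lt hgt] at hpos
      simp at hpos
    · have hq : ((m2 - 1) / 2 : ℕ) ≤ m2 - 1 := Nat.div_le_self _ _
      have hje : (jn : ℤ) = ((m2 - 1) / 2 : ℕ) + 1 := by rw [hjZ, heq]
      omega
  set Y0 := binPartial m2 jn with hY0
  have hn1Y : n1 = Y0 + 2 := by
    have hcast : (Y0 : ℤ) = ∑ i ∈ Finset.range jn, (Nat.choose m2 i : ℤ) := by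
      rw [hY0]
      unfold binPartial
      push_cast
      rfl
    have hn1Z : (n1 : ℤ) = 2 + (Y0 : ℤ) := by rw [hjk, hcast]
    omega
  set B := ∑ i ∈ Finset.range jn, (m2 - i) * Nat.choose m2 i with hBdef
  have hwBY0 : wB m2 Y0 = B := by rw [hY0, hBdef]; exact wB_bp hjnm2
  have hwBY1 : wB m2 (Y0 + 1) = B + (m2 - jn) := by rw [hY0, hBdef]; exact wB_bp_succ hjnm2
  -- per-edge values of wB
  have hleafval : ∀ e ∈ ETL, wB m2 (deg1E P e) = B + (m2 - jn) := by
    intro e he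
    rw [hETL, Finset.mem_filter] at he
    rw [he.2, show n1 - 1 = Y0 + 1 by omega, hwBY1]
  have hleafsum : ∑ e ∈ ETL, wB m2 (deg1E P e) = ETL.card * (B + (m2 - jn)) := by
    rw [Finset.sum_congr rfl hleafval, Finset.sum_const, smul_eq_mul]
  have hnonleaf : ∀ e ∈ ETN, wB m2 (deg1E P e) + (Y0 - deg1E P e) * (m2 + 1 - jn) ≤ B := by
    intro e he
    rw [hETN, Finset.mem_filter] at he
    have h1 := hyle e he.1
    have hy2 : deg1E P e ≤ binPartial m2 jn := by rw [← hY0]; omega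
    have hle := wB_le_of_le hjnm2 hy2
    rw [← hY0] at hle
    rw [hwBY0] at hle
    exact hle
  -- main counting facts over ℕ
  have hF1 : wComp P c + d = m2 * VT2.card + ∑ e ∈ ET, wB m2 (deg1E P e) := by
    have h1 := hV1w
    have h2 := hedgesum
    have h3 := hV2w
    rw [hwCompeq, hVTsplit (wtv P), hdeq]
    omega
  have hF2 : ∑ e ∈ ETN, wB m2 (deg1E P e)
      + (∑ e ∈ ETN, (Y0 - deg1E P e)) * (m2 + 1 - jn) ≤ ETN.card * B := by
    rw [Finset.sum_mul, ← Finset.sum_add_distrib]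
    calc ∑ e ∈ ETN, (wB m2 (deg1E P e) + (Y0 - deg1E P e) * (m2 + 1 - jn))
        ≤ ∑ e ∈ ETN, B := Finset.sum_le_sum hnonleaf
    _ = ETN.card * B := by rw [Finset.sum_const, smul_eq_mul]
  have hSWsplit : ∑ e ∈ ET, wB m2 (deg1E P e)
      = ETL.card * (B + (m2 - jn)) + ∑ e ∈ ETN, wB m2 (deg1E P e) := by
    rw [hETsplit (fun e => wB m2 (deg1E P e)), hleafsum]
  have hF4 : VT1.card = ETL.card * (Y0 + 1) + ∑ e ∈ ETN, deg1E P e := by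
    rw [hV1card, hETsplit (fun e => (D e).card)]
    congr 1
    · have hval : ∀ e ∈ ETL, (D e).card = Y0 + 1 := by
        intro e he
        rw [hETL, Finset.mem_filter] at he
        rw [← hdeg1 e, he.2]
        omega
      rw [Finset.sum_congr rfl hval, Finset.sum_const, smul_eq_mul]
    · exact Finset.sum_congr rfl fun e _ => (hdeg1 e).symm
  have hF5 : ∑ e ∈ ETN, deg1E P e + ∑ e ∈ ETN, (Y0 - deg1E P e) = ETN.card * Y0 := by
    rw [← Finset.sum_add_distrib]
    calc ∑ e ∈ ETN, (deg1E P e + (Y0 - deg1E P e)) = ∑ e ∈ ETN, Y0 := by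
          refine Finset.sum_congr rfl fun e he => ?_
          rw [hETN, Finset.mem_filter] at he
          have h1 := hyle e he.1
          omega
    _ = ETN.card * Y0 := by rw [Finset.sum_const, smul_eq_mul]
  have hF6 : VT1.card + (muComp P c + 2 * VT2.card) = n1 * ET.card := by
    have h1 := hdouble
    have h2 := hVTsplit (degE P)
    have h3 := hV1deg
    have h4 := hS2
    omega
  have hF7 : VT1.card + VT2.card = (Y0 + 1) * ET.card + 1 := by
    have h1 := htree
    rw [hVcard, hEcard, hcards, show n1 - 1 = Y0 + 1 by omega] at h1
    exact h1
  -- pass to ℤ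
  set SW := ∑ e ∈ ET, wB m2 (deg1E P e) with hSWdef
  set SN := ∑ e ∈ ETN, wB m2 (deg1E P e) with hSNdef
  set SY := ∑ e ∈ ETN, deg1E P e with hSYdef
  set AA := ∑ e ∈ ETN, (Y0 - deg1E P e) with hAAdef
  clear_value SW SN SY AA jn Y0 B
  set nW := wComp P c with hnWdef
  set nMu := muComp P c with hnMudef
  set nV1 := VT1.card with hnV1def
  set nV2 := VT2.card with hnV2def
  set nE := ET.card with hnEdef
  set nEL := ETL.card with hnELdef
  set nEN := ETN.card with hnENdef
  clear_value nW nMu nV1 nV2 nE nEL nEN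
  clear_value VT1 VT2 ETL ETN
  have zl : (l : ℤ) = nEL := by exact_mod_cast hl'
  have z1 : (nW : ℤ) + d = m2 * nV2 + SW := by exact_mod_cast hF1
  have zSW : (SW : ℤ) = (nEL : ℤ) * ((B : ℤ) + ((m2 : ℤ) - jn)) + SN := by
    zify [hjnm2] at hSWsplit
    exact hSWsplit
  have z2 : (SN : ℤ) + (AA : ℤ) * ((m2 : ℤ) + 1 - jn) ≤ (nEN : ℤ) * B := by
    zify [show jn ≤ m2 + 1 by omega] at hF2
    exact hF2
  have z4 : (nV1 : ℤ) = (nEL : ℤ) * ((Y0 : ℤ) + 1) + SY := by exact_mod_cast hF4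
  have z5 : (SY : ℤ) + AA = (nEN : ℤ) * Y0 := by exact_mod_cast hF5
  have z6 : (nV1 : ℤ) + ((nMu : ℤ) + 2 * nV2) = ((Y0 : ℤ) + 2) * nE := by
    have hF6' : nV1 + (nMu + 2 * nV2) = (Y0 + 2) * nE := by
      rw [← hn1Y]
      exact hF6
    exact_mod_cast hF6'
  have z7 : (nV1 : ℤ) + nV2 = ((Y0 : ℤ) + 1) * nE + 1 := by exact_mod_cast hF7
  have z3 : (l : ℤ) + nEN = nE := by
    rw [zl]
    exact_mod_cast hEcards.symm
  clear hdeq hwSEle hwle hV1w hV1sum hbiU hdisjD hVTsplit hETsplit hyle hnonleaf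
    hleafval hleafsum hwBY0 hwBY1 hdouble hdeg2e hdegpos hDGfil hNEfil hmemVE
    hwSEeq hdeg1 hDset hNEcard hdeg hDmem hNEmem hDGmem hETmem hVTmem hedgesum
    hS2 hmu2 hmueq hwCompeq hV2w hV1card hV1deg hcards hEcards hF1 hF2 hF4 hF5
    hF6 hF7 hSWsplit
  have e1 : (nV2 : ℤ) = (nE : ℤ) - 1 - nMu := by linarith [z6, z7]
  have e2 : (AA : ℤ) = (l : ℤ) - nMu - 2 := by
    have p3 : ((l : ℤ) + nEN) * Y0 = (nE : ℤ) * Y0 := by rw [z3]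
    have p4 : (nEL : ℤ) * ((Y0 : ℤ) + 1) = (l : ℤ) * ((Y0 : ℤ) + 1) := by rw [zl]
    linarith [z4, z5, z6, e1, p3, p4]
  have hZ : (nW : ℤ) + d + l + ((jn : ℤ) - 1) * nMu + 2 * ((jn : ℤ) - 1)
      ≤ ((m2 : ℤ) + B) * nE + m2 := by
    have p1 : (m2 : ℤ) * nV2 = (m2 : ℤ) * nE - m2 - m2 * nMu := by
      rw [e1]; ring
    have p2 : (AA : ℤ) * ((m2 : ℤ) + 1 - jn)
        = ((l : ℤ) - nMu - 2) * ((m2 : ℤ) + 1 - jn) := by rw [e2]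
    have p5 : ((nEN : ℤ)) * B = ((nE : ℤ) - l) * B := by
      have he : (nEN : ℤ) = (nE : ℤ) - l := by linarith [z3]
      rw [he]
    have p6 : (nEL : ℤ) * ((B : ℤ) + ((m2 : ℤ) - jn))
        = (l : ℤ) * ((B : ℤ) + ((m2 : ℤ) - jn)) := by rw [zl]
    linarith [z1, zSW, z2, p1, p2, p5, p6]
  -- conclusion over ℝ
  have hrm : r * (m2 : ℝ) = (m2 : ℝ) + (B : ℝ) := by
    have hBr : (B : ℝ) = ∑ i ∈ Finset.range jn, ((m2 : ℝ) - i) * Nat.choose m2 i := by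
      rw [hBdef]
      push_cast
      refine Finset.sum_congr rfl fun i hi => ?_
      rw [Finset.mem_range] at hi
      rw [Nat.cast_sub (by omega : i ≤ m2)]
    rw [hr, add_mul, one_mul, Finset.sum_mul, hBr]
    congr 1
    refine Finset.sum_congr rfl fun i hi => ?_
    have hm2ne : (m2 : ℝ) ≠ 0 := Nat.cast_ne_zero.mpr (by omega)
    field_simp
  rw [hEcard, hrm]
  have hjR : (j : ℝ) = (jn : ℝ) - 1 := by
    have hc : ((jn : ℤ) : ℝ) = ((j : ℤ) : ℝ) + 1 := by exact_mod_cast congrArg (fun z : ℤ => (z : ℝ)) hjZ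
    push_cast at hc
    linarith
  have hZR : (nW : ℝ) + d + l + ((jn : ℝ) - 1) * nMu + 2 * ((jn : ℝ) - 1)
      ≤ ((m2 : ℝ) + B) * nE + m2 := by
    exact_mod_cast hZ
  have hq1 : (j : ℝ) * nMu = ((jn : ℝ) - 1) * nMu := by rw [hjR]
  linarith [hZR, hjR, hq1]
end

section
/- Let P be a regular partition of K_{m_1(n_1),m_2(n_2)} such that τ(P) is asymmetric, and let w(τ'(P)) be the sum of the weights of all vertices of τ'(P). Then w(τ'(P)) - r·m_2·m_1 ≤ Σ_G v(G) + m_2·2^{m_2-1}, where the sum ranges over the connected components G of τ'(P) that contain at least one edge. -/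
variable {m1 n1 m2 n2 : ℕ}

lemma sum_card_all_finsets (m : ℕ) (hm : 1 ≤ m) :
    ∑ T : Finset (Fin m), T.card = m * 2^(m-1) := by
  have h1 : ∑ T : Finset (Fin m), T.card = ∑ T : Finset (Fin m), Tᶜ.card :=
    Fintype.sum_bijective compl (Function.Involutive.bijective fun T => compl_compl T)
      _ _ (fun T => by simp)
  have h2 : 2 * ∑ T : Finset (Fin m), T.card = 2^m * m := by
    rw [two_mul]; nth_rewrite 2 [h1]
    rw [← Finset.sum_add_distrib]
    have : ∀ T : Finset (Fin m), T.card + Tᶜ.card = m := fun T => by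
      rw [Finset.card_add_card_compl]; simp
    rw [Finset.sum_congr rfl (fun T _ => this T), Finset.sum_const, smul_eq_mul,
      Finset.card_univ, Fintype.card_finset, Fintype.card_fin]
  obtain ⟨m', rfl⟩ : ∃ m', m = m' + 1 := ⟨m - 1, by omega⟩
  have h3 : (2:ℕ)^(m'+1) = 2 * 2^m' := by ring
  rw [h3] at h2
  have := Nat.eq_of_mul_eq_mul_left (show 0 < 2 by norm_num)
    (show 2 * ∑ T : Finset (Fin (m'+1)), T.card = 2 * (2^m' * (m'+1)) by linarith)
  rw [this]; simp; ring

/-- **Lemma 4.8.** If `τ(P)` is asymmetric, then the value of `τ'(P)`, namely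
`w(τ'(P)) - r·m2·m1`, is at most the sum of the values `v(G) = w(G) - r·m2·|E(G)|`
over the connected components `G` of `τ'(P)` containing at least one edge,
plus `m2·2^(m2-1)`. -/
theorem total_value_bound
    (m1 n1 m2 n2 : ℕ) (hn1 : 2 ≤ n1) (hm2 : 1 ≤ m2)
    (j : ℤ) (k : ℕ) (r : ℝ)
    (hj : -1 ≤ j)
    (hjk : (n1 : ℤ) = 2 + (∑ i ∈ Finset.range (j + 1).toNat, (Nat.choose m2 i : ℤ)) + k)
    (hcond : (j < (((m2 - 1) / 2 : ℕ) : ℤ) ∧ (k : ℤ) < Nat.choose m2 (j + 1).toNat)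
      ∨ j = (((m2 - 1) / 2 : ℕ) : ℤ))
    (hr : r = 1 + (∑ i ∈ Finset.range (j + 1).toNat, ((m2 - i : ℝ) / m2) * Nat.choose m2 i)
      + (if j < (((m2 - 1) / 2 : ℕ) : ℤ) then (((m2 : ℝ) - j - 1) / m2) * k
          else (k : ℝ) / 2))
    (P : Set (Set (MPV m1 n1 m2 n2)))
    (hreg : IsRegularPartition P) (hasym : HypAsymmetric (tauInc P)) :
    ((∑ᶠ p : ↥P, wtv P p : ℕ) : ℝ) - r * m2 * m1
      ≤ (∑ᶠ c ∈ {c : (incTG P).ConnectedComponent |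
            ∃ e : Fin m1, (incTG P).connectedComponentMk (Sum.inr e) = c},
          ((wComp P c : ℝ) - r * m2 * (compE P c).ncard))
        + m2 * 2 ^ (m2 - 1) := by
  classical
  haveI : Fintype ↥P := Fintype.ofFinite _
  haveI : Fintype (incTG P).ConnectedComponent := Fintype.ofFinite _
  set g : ↥P → (incTG P).ConnectedComponent :=
    fun p => (incTG P).connectedComponentMk (Sum.inl p) with hg
  set h : Fin m1 → (incTG P).ConnectedComponent :=
    fun e => (incTG P).connectedComponentMk (Sum.inr e) with hh
  -- basic facts about degrees
  have hdeg0 : ∀ p : ↥P, degE P p = 0 ↔ ∀ j, ¬ tauInc' P p j := by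
    intro p
    rw [degE, Set.ncard_eq_zero (Set.toFinite _)]
    simp [Set.eq_empty_iff_forall_notMem]
  have hadj : ∀ (p : ↥P) (j : Fin m1), tauInc' P p j →
      (incTG P).Adj (Sum.inl p) (Sum.inr j) := by
    intro p j hj
    rw [incTG, SimpleGraph.fromRel_adj]
    exact ⟨by simp, Or.inl ⟨p, j, rfl, rfl, hj⟩⟩
  have hreach : ∀ (p : ↥P) (e : Fin m1), h e = g p → ∃ j, tauInc' P p j := by
    intro p e hpe
    have hr2 : (incTG P).Reachable (Sum.inl p) (Sum.inr e) :=
      (SimpleGraph.ConnectedComponent.eq).1 hpe.symm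
    obtain ⟨w⟩ := hr2
    cases w with
    | cons hadj' q =>
      rw [incTG, SimpleGraph.fromRel_adj] at hadj'
      obtain ⟨-, hrel | hrel⟩ := hadj'
      · obtain ⟨p', j, hp', hx, hinc⟩ := hrel
        cases Sum.inl.inj hp'
        exact ⟨j, hinc⟩
      · obtain ⟨p', j, hp', hx, hinc⟩ := hrel
        exact absurd hx (by simp)
  have hfib : ∀ p : ↥P, degE P p = 0 ↔ ∀ e : Fin m1, h e ≠ g p := by
    intro p
    constructor
    · intro h0 e he
      obtain ⟨j, hj⟩ := hreach p e he
      exact (hdeg0 p).1 h0 j hj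
    · intro hne
      rw [hdeg0]
      intro j hj
      exact hne j (SimpleGraph.ConnectedComponent.sound (hadj p j hj).symm.reachable)
  -- the set of components containing an edge, as a finset
  set S : Finset (incTG P).ConnectedComponent :=
    Finset.univ.filter (fun c => ∃ e, h e = c) with hS
  have hSset : {c : (incTG P).ConnectedComponent |
      ∃ e : Fin m1, (incTG P).connectedComponentMk (Sum.inr e) = c} = (S : Set _) := by
    ext c; simp [hS, hh]
  -- rewrite finsums as finset sums
  have hWcomp : ∀ c, wComp P c = ∑ p ∈ Finset.univ.filter (fun p => g p = c), wtv P p := by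
    intro c
    rw [wComp]
    have : compV P c = ((Finset.univ.filter (fun p => g p = c)) : Finset ↥P) := by
      ext p; simp [compV, hg]
    rw [this, finsum_mem_coe_finset]
  have hEcomp : ∀ c, (compE P c).ncard = (Finset.univ.filter (fun e => h e = c)).card := by
    intro c
    have : compE P c = ((Finset.univ.filter (fun e => h e = c)) : Finset (Fin m1)) := by
      ext e; simp [compE, hh]
    rw [this, Set.ncard_coe_finset]
  have htot : (∑ᶠ p : ↥P, wtv P p) = ∑ p : ↥P, wtv P p := finsum_eq_sum_of_fintype _
  have hRHS : (∑ᶠ c ∈ {c : (incTG P).ConnectedComponent |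
        ∃ e : Fin m1, (incTG P).connectedComponentMk (Sum.inr e) = c},
        ((wComp P c : ℝ) - r * m2 * (compE P c).ncard))
      = ∑ c ∈ S, ((wComp P c : ℝ) - r * m2 * (compE P c).ncard) := by
    rw [hSset, finsum_mem_coe_finset]
  rw [htot, hRHS]
  -- fiber decomposition of the total weight
  have hfibsum : (∑ p : ↥P, (wtv P p : ℝ))
      = ∑ c : (incTG P).ConnectedComponent,
          ∑ p ∈ Finset.univ.filter (fun p => g p = c), (wtv P p : ℝ) :=
    (Finset.sum_fiberwise Finset.univ g _).symm
  set D0 : Finset ↥P := Finset.univ.filter (fun p => degE P p = 0) with hD0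
  -- the sum over components without edge equals the sum over degree-0 vertices
  have hcompl : ∑ c ∈ Sᶜ, ∑ p ∈ Finset.univ.filter (fun p => g p = c), (wtv P p : ℝ)
      = ∑ p ∈ D0, (wtv P p : ℝ) := by
    rw [← Finset.sum_fiberwise_of_maps_to
      (g := g) (t := Sᶜ) (f := fun p => (wtv P p : ℝ))
      (fun p hp => by
        simp only [hD0, Finset.mem_filter, Finset.mem_univ, true_and] at hp
        simp only [Finset.mem_compl, hS, Finset.mem_filter, Finset.mem_univ, true_and]
        rintro ⟨e, he⟩
        exact (hfib p).1 hp e he)]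
    refine Finset.sum_congr rfl (fun c hc => ?_)
    refine Finset.sum_congr ?_ (fun _ _ => rfl)
    simp only [Finset.mem_compl, hS, Finset.mem_filter, Finset.mem_univ, true_and,
      not_exists] at hc
    ext p
    simp only [Finset.mem_filter, Finset.mem_univ, true_and, hD0]
    constructor
    · intro hpc
      exact ⟨(hfib p).2 fun e he => hc e (by rw [he, hpc]), hpc⟩
    · rintro ⟨-, hpc⟩; exact hpc
  -- counting edges
  have hedges : ∑ c ∈ S, ((Finset.univ.filter (fun e => h e = c)).card : ℝ) = m1 := by
    have h1 : (Finset.univ : Finset (Fin m1)).card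
        = ∑ c : (incTG P).ConnectedComponent,
          (Finset.univ.filter (fun e => h e = c)).card :=
      Finset.card_eq_sum_card_fiberwise (fun e _ => Finset.mem_univ (h e))
    have h2 : ∑ c ∈ S, ((Finset.univ.filter (fun e => h e = c)).card : ℝ)
        = ∑ c : (incTG P).ConnectedComponent,
          ((Finset.univ.filter (fun e => h e = c)).card : ℝ) := by
      refine Finset.sum_subset (Finset.subset_univ S) ?_
      intro c _ hc
      simp only [hS, Finset.mem_filter, Finset.mem_univ, true_and, not_exists] at hc
      have : Finset.univ.filter (fun e => h e = c) = ∅ := by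
        ext e; simp [hc e]
      simp [this]
    have h3 := congrArg (fun n : ℕ => (n : ℝ)) h1
    push_cast at h3
    rw [h2, ← h3]
    simp
  -- bound on the degree-0 vertices
  have hD0bound : ∑ p ∈ D0, (wtv P p : ℝ) ≤ (m2 : ℝ) * 2 ^ (m2 - 1) := by
    set L : ↥P → Finset (Fin m2) := fun p => (Set.toFinite (labelOf P p)).toFinset with hL
    have hwtvL : ∀ p, wtv P p = (L p).card := by
      intro p; rw [wtv, Set.ncard_eq_toFinset_card (labelOf P p) (Set.toFinite _)]
    have hinj : ∀ p ∈ D0, ∀ q ∈ D0, L p = L q → p = q := by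
      intro p hp q hq hpq
      by_contra hne
      have hlab : labelOf P p = labelOf P q := by
        have := congrArg (fun T : Finset (Fin m2) => (T : Set (Fin m2))) hpq
        simpa [hL, Set.Finite.coe_toFinset] using this
      simp only [hD0, Finset.mem_filter, Finset.mem_univ, true_and] at hp hq
      have hcompat : ∀ v e, tauInc P v e ↔ tauInc P (Equiv.swap p q v) ((1 : Equiv.Perm (Fin m1 ⊕ Fin m2)) e) := by
        intro v e
        have hpq' : ∀ e', tauInc P p e' ↔ tauInc P q e' := by
          intro e'
          cases e' with
          | inl j =>
            constructor
            · intro hx; exact absurd hx ((hdeg0 p).1 hp j)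
            · intro hx; exact absurd hx ((hdeg0 q).1 hq j)
          | inr i =>
            have : (i ∈ labelOf P p) ↔ (i ∈ labelOf P q) := by rw [hlab]
            simpa [labelOf] using this
        simp only [Equiv.Perm.one_apply]
        rcases eq_or_ne v p with rfl | hvp
        · rw [Equiv.swap_apply_left]; exact hpq' e
        · rcases eq_or_ne v q with rfl | hvq
          · rw [Equiv.swap_apply_right]; exact (hpq' e).symm
          · rw [Equiv.swap_apply_of_ne_of_ne hvp hvq]
      have := (hasym (Equiv.swap p q) 1 hcompat).1
      exact hne (Equiv.swap_eq_one_iff.1 this)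
    have hnat : ∑ p ∈ D0, wtv P p ≤ m2 * 2 ^ (m2 - 1) := by
      calc ∑ p ∈ D0, wtv P p = ∑ p ∈ D0, (L p).card := Finset.sum_congr rfl (fun p _ => hwtvL p)
        _ = ∑ T ∈ D0.image L, T.card := (Finset.sum_image hinj).symm
        _ ≤ ∑ T : Finset (Fin m2), T.card :=
            Finset.sum_le_sum_of_subset (Finset.subset_univ _)
        _ = m2 * 2 ^ (m2 - 1) := sum_card_all_finsets m2 hm2
    calc ∑ p ∈ D0, (wtv P p : ℝ) = ((∑ p ∈ D0, wtv P p : ℕ) : ℝ) := by push_cast; ring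
      _ ≤ ((m2 * 2 ^ (m2 - 1) : ℕ) : ℝ) := by exact_mod_cast hnat
      _ = (m2 : ℝ) * 2 ^ (m2 - 1) := by push_cast; ring
  -- assemble
  have hsplit : ((∑ p : ↥P, wtv P p : ℕ) : ℝ)
      = ∑ c ∈ S, ∑ p ∈ Finset.univ.filter (fun p => g p = c), (wtv P p : ℝ)
        + ∑ p ∈ D0, (wtv P p : ℝ) := by
    push_cast
    rw [hfibsum, ← hcompl, Finset.sum_add_sum_compl S]
  rw [hsplit]
  have hm1 : r * m2 * m1 = ∑ c ∈ S, r * m2 * ((compE P c).ncard : ℝ) := by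
    have : ∑ c ∈ S, r * m2 * ((compE P c).ncard : ℝ)
        = r * m2 * ∑ c ∈ S, ((compE P c).ncard : ℝ) := by rw [Finset.mul_sum]
    rw [this]
    congr 1
    rw [← hedges]
    exact Finset.sum_congr rfl (fun c _ => by rw [hEcomp c])
  have hwc : ∀ c ∈ S, ∑ p ∈ Finset.univ.filter (fun p => g p = c), (wtv P p : ℝ)
      = (wComp P c : ℝ) := by
    intro c _
    rw [hWcomp c]
    push_cast
    ring
  calc ∑ c ∈ S, ∑ p ∈ Finset.univ.filter (fun p => g p = c), (wtv P p : ℝ)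
        + ∑ p ∈ D0, (wtv P p : ℝ) - r * m2 * m1
      = ∑ c ∈ S, ((wComp P c : ℝ) - r * m2 * ((compE P c).ncard : ℝ))
        + ∑ p ∈ D0, (wtv P p : ℝ) := by
        rw [hm1, Finset.sum_sub_distrib, Finset.sum_congr rfl hwc]
        ring
    _ ≤ ∑ c ∈ S, ((wComp P c : ℝ) - r * m2 * ((compE P c).ncard : ℝ))
        + (m2 : ℝ) * 2 ^ (m2 - 1) := by linarith [hD0bound]
end
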